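/- Let w be any solution of the Toda equation Toda(q,g). Then for each 1 ≤ k ≤ r−1, the Gaussian curvature of the conformal metric e^{−w_k+w_{k+1}} g₀ |dz|², namely −2·(e^{−w_k+w_{k+1}} g₀)⁻¹ · Δ(−w_k + w_{k+1} + log g₀), is bounded from below by −4 on Ω. -/

import Mathlib

open MeasureTheory

/-- The operator `Δ = ∂_z ∂_z̄ = (1/4)(∂²/∂x² + ∂²/∂y²)` acting on functions `ℂ → ℝ`. -/
noncomputable def lap (f : ℂ → ℝ) (z : ℂ) : ℝ :=
  (1 / 4) * (iteratedFDeriv ℝ 2 f z ![1, 1] + iteratedFDeriv ℝ 2 f z ![Complex.I, Complex.I])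

/-- The Gaussian curvature `k_g = -(2/g₀) Δ log g₀` of the metric `g₀ dz⊗dz̄`. -/
noncomputable def kGauss (g₀ : ℂ → ℝ) (z : ℂ) : ℝ :=
  -(2 / g₀ z) * lap (fun ζ => Real.log (g₀ ζ)) z

/-- `|q|_g² = |q|²/g₀^r`. -/
noncomputable def qnormSq (g₀ : ℂ → ℝ) (q : ℂ → ℂ) (r : ℕ) (z : ℂ) : ℝ :=
  ‖q z‖ ^ 2 / g₀ z ^ r

/-- `|q|_g = |q|/g₀^{r/2}`. -/
noncomputable def qnorm (g₀ : ℂ → ℝ) (q : ℂ → ℂ) (r : ℕ) (z : ℂ) : ℝ :=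
  ‖q z‖ / g₀ z ^ ((r : ℝ) / 2)

/-- Completeness of the conformal metric `ρ |dz|²` on an open set `U ⊆ ℂ`:
every C¹ curve `γ : [0,1) → U` eventually leaving every compact subset of `U`
has infinite length `∫₀¹ ρ(γ(t))^{1/2} |γ'(t)| dt = ∞`. -/
def ConformalComplete (U : Set ℂ) (ρ : ℂ → ℝ) : Prop :=
  ∀ γ : ℝ → ℂ,
    ContDiffOn ℝ 1 γ (Set.Ico 0 1) →
    (∀ t ∈ Set.Ico (0:ℝ) 1, γ t ∈ U) →
    (∀ K : Set ℂ, IsCompact K → K ⊆ U →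
      ∃ T ∈ Set.Ico (0:ℝ) 1, ∀ t ∈ Set.Ico T 1, γ t ∉ K) →
    ∫⁻ t in Set.Ico (0:ℝ) 1, ENNReal.ofReal (Real.sqrt (ρ (γ t)) * ‖deriv γ t‖) = ⊤

/-- A solution `w = (w₁,…,w_r)` of the Toda equation `Toda(q,g)` on `Ω`,
for the Kähler metric `g = g₀ dz⊗dz̄` and `r`-differential `q dz^r`. -/
def IsTodaSolution (Ω : Set ℂ) (g₀ : ℂ → ℝ) (q : ℂ → ℂ) (r : ℕ) (w : ℕ → ℂ → ℝ) : Prop :=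
  (∀ i, 1 ≤ i → i ≤ r → ContDiffOn ℝ (⊤ : ℕ∞) (w i) Ω) ∧
  (∀ z ∈ Ω, ∑ i ∈ Finset.Icc 1 r, w i z = 0) ∧
  (∀ z ∈ Ω, lap (w 1) z / g₀ z =
      Real.exp (-(w r z) + w 1 z) * qnormSq g₀ q r z
        - Real.exp (-(w 1 z) + w 2 z) - (((r : ℝ) - 1) / 4) * kGauss g₀ z) ∧
  (∀ i, 2 ≤ i → i ≤ r - 1 → ∀ z ∈ Ω,
      lap (w i) z / g₀ z =
        Real.exp (-(w (i - 1) z) + w i z) - Real.exp (-(w i z) + w (i + 1) z)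
          - (((r : ℝ) + 1 - 2 * (i : ℝ)) / 4) * kGauss g₀ z) ∧
  (∀ z ∈ Ω, lap (w r) z / g₀ z =
      Real.exp (-(w (r - 1) z) + w r z)
        - Real.exp (-(w r z) + w 1 z) * qnormSq g₀ q r z
        - ((1 - (r : ℝ)) / 4) * kGauss g₀ z)

/-- A solution is real if `wᵢ + w_{r+1-i} = 0` on `Ω` for all `i`. -/
def IsRealToda (Ω : Set ℂ) (r : ℕ) (w : ℕ → ℂ → ℝ) : Prop :=
  ∀ i, 1 ≤ i → i ≤ r → ∀ z ∈ Ω, w i z + w (r + 1 - i) z = 0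

/-- A solution is complete if for each `1 ≤ i ≤ r-1`, the conformal metric
`e^{-wᵢ+w_{i+1}} g₀ |dz|²` on `Ω` is complete. -/
def IsCompleteToda (Ω : Set ℂ) (g₀ : ℂ → ℝ) (r : ℕ) (w : ℕ → ℂ → ℝ) : Prop :=
  ∀ i, 1 ≤ i → i ≤ r - 1 →
    ConformalComplete Ω (fun z => Real.exp (-(w i z) + w (i + 1) z) * g₀ z)


private lemma lap_comb (f g h : ℂ → ℝ) {s : Set ℂ} (hs : IsOpen s) {z : ℂ} (hz : z ∈ s)
    (hf : ContDiffOn ℝ 2 f s) (hg : ContDiffOn ℝ 2 g s) (hh : ContDiffOn ℝ 2 h s) :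
    lap (fun ζ => -(f ζ) + g ζ + h ζ) z = -(lap f z) + lap g z + lap h z := by
  have hu : UniqueDiffOn ℝ s := hs.uniqueDiffOn
  have key : ∀ v : Fin 2 → ℂ,
      iteratedFDeriv ℝ 2 (fun ζ => -(f ζ) + g ζ + h ζ) z v =
        -(iteratedFDeriv ℝ 2 f z v) + iteratedFDeriv ℝ 2 g z v + iteratedFDeriv ℝ 2 h z v := by
    intro v
    have e1 : iteratedFDerivWithin ℝ 2 (fun ζ => -(f ζ) + g ζ + h ζ) s z =
        iteratedFDeriv ℝ 2 (fun ζ => -(f ζ) + g ζ + h ζ) z :=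
      iteratedFDerivWithin_of_isOpen (𝕜 := ℝ) 2 hs hz
    have e2 := iteratedFDerivWithin_of_isOpen (𝕜 := ℝ) (f := f) 2 hs hz
    have e3 := iteratedFDerivWithin_of_isOpen (𝕜 := ℝ) (f := g) 2 hs hz
    have e4 := iteratedFDerivWithin_of_isOpen (𝕜 := ℝ) (f := h) 2 hs hz
    have hsum : iteratedFDerivWithin ℝ 2 (fun ζ => -(f ζ) + g ζ + h ζ) s z =
        -(iteratedFDerivWithin ℝ 2 f s z) + iteratedFDerivWithin ℝ 2 g s z
          + iteratedFDerivWithin ℝ 2 h s z := by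
      have h1 : ContDiffOn ℝ 2 (fun ζ => -(f ζ)) s := hf.neg
      rw [iteratedFDerivWithin_add_apply' (h1.add hg z hz) (hh z hz) hu hz,
        iteratedFDerivWithin_add_apply' (h1 z hz) (hg z hz) hu hz]
      have hneg : iteratedFDerivWithin ℝ 2 (fun ζ => -f ζ) s z
          = -iteratedFDerivWithin ℝ 2 f s z := iteratedFDerivWithin_neg_apply hu hz
      rw [hneg]
    rw [← e1, hsum, e2, e3, e4]
    simp
  simp only [lap, key]
  ring

private lemma final_ineq (E G A B kg c : ℝ) (hE : 0 < E) (hG : 0 < G) (hA : 0 ≤ A) (hB : 0 ≤ B) :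
    -4 ≤ -2 * (E * G)⁻¹ *
      (-(G * (A - E - c / 4 * kg)) + G * (E - B - (c - 2) / 4 * kg) + -(G / 2) * kg) := by
  have h : -2 * (E * G)⁻¹ *
      (-(G * (A - E - c / 4 * kg)) + G * (E - B - (c - 2) / 4 * kg) + -(G / 2) * kg)
      = -4 + 2 * (A + B) / E := by
    field_simp
    ring
  rw [h]
  have h2 : 0 ≤ 2 * (A + B) / E := by positivity
  linarith

/-- for any solution `w` of `Toda(q,g)` and any `1 ≤ k ≤ r−1`, the
Gaussian curvature of the conformal metric `e^{−w_k+w_{k+1}} g₀ |dz|²`, namely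
`−2·(e^{−w_k+w_{k+1}} g₀)⁻¹ · Δ(−w_k + w_{k+1} + log g₀)`, is bounded from below
by `−4` on `Ω`. -/
theorem toda_intermediate_metrics_curvature_lower_bound
    (Ω : Set ℂ) (hΩopen : IsOpen Ω) (hΩne : Ω.Nonempty)
    (g₀ : ℂ → ℝ) (hg₀ : ContDiffOn ℝ (⊤ : ℕ∞) g₀ Ω) (hg₀pos : ∀ z ∈ Ω, 0 < g₀ z)
    (r : ℕ) (hr : 2 ≤ r)
    (q : ℂ → ℂ) (hq : DifferentiableOn ℂ q Ω)
    (w : ℕ → ℂ → ℝ) (hw : IsTodaSolution Ω g₀ q r w) :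
    ∀ k, 1 ≤ k → k ≤ r - 1 → ∀ z ∈ Ω,
      -4 ≤ -2 * (Real.exp (-(w k z) + w (k + 1) z) * g₀ z)⁻¹ *
            lap (fun ζ => -(w k ζ) + w (k + 1) ζ + Real.log (g₀ ζ)) z := by
  obtain ⟨hsm, hsum, heq1, heqmid, heqr⟩ := hw
  intro k hk1 hk2 z hz
  have hG : 0 < g₀ z := hg₀pos z hz
  have hGne : g₀ z ≠ 0 := hG.ne'
  have hq0 : 0 ≤ qnormSq g₀ q r z := div_nonneg (by positivity) (pow_nonneg hG.le r)
  have hwk : ContDiffOn ℝ 2 (w k) Ω := (hsm k hk1 (by omega)).of_le (by norm_cast)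
  have hwk1 : ContDiffOn ℝ 2 (w (k + 1)) Ω := (hsm (k + 1) (by omega) (by omega)).of_le (by norm_cast)
  have hlogc : ContDiffOn ℝ 2 (fun ζ => Real.log (g₀ ζ)) Ω :=
    (hg₀.log (fun x hx => (hg₀pos x hx).ne')).of_le (by norm_cast)
  rw [lap_comb (w k) (w (k + 1)) _ hΩopen hz hwk hwk1 hlogc]
  have hlapg : lap (fun ζ => Real.log (g₀ ζ)) z = -(g₀ z / 2) * kGauss g₀ z := by
    unfold kGauss; field_simp
  obtain ⟨A, hA0, hAeq⟩ : ∃ A, 0 ≤ A ∧ lap (w k) z =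
      g₀ z * (A - Real.exp (-(w k z) + w (k + 1) z)
        - ((r : ℝ) + 1 - 2 * (k : ℝ)) / 4 * kGauss g₀ z) := by
    rcases eq_or_lt_of_le hk1 with h1 | h1
    · subst h1
      refine ⟨Real.exp (-(w r z) + w 1 z) * qnormSq g₀ q r z,
        mul_nonneg (Real.exp_pos _).le hq0, ?_⟩
      have h := heq1 z hz
      rw [div_eq_iff hGne] at h
      rw [show (1 : ℕ) + 1 = 2 from rfl, h]
      push_cast
      ring
    · refine ⟨Real.exp (-(w (k - 1) z) + w k z), (Real.exp_pos _).le, ?_⟩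
      have h := heqmid k (by omega) (by omega) z hz
      rw [div_eq_iff hGne] at h
      rw [h]
      push_cast
      ring
  obtain ⟨B, hB0, hBeq⟩ : ∃ B, 0 ≤ B ∧ lap (w (k + 1)) z =
      g₀ z * (Real.exp (-(w k z) + w (k + 1) z) - B
        - (((r : ℝ) + 1 - 2 * (k : ℝ)) - 2) / 4 * kGauss g₀ z) := by
    by_cases hlt : k + 1 ≤ r - 1
    · refine ⟨Real.exp (-(w (k + 1) z) + w (k + 1 + 1) z), (Real.exp_pos _).le, ?_⟩
      have h := heqmid (k + 1) (by omega) hlt z hz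
      rw [div_eq_iff hGne] at h
      rw [show k + 1 - 1 = k from rfl] at h
      rw [h]
      push_cast
      ring
    · have hkr : r = k + 1 := by omega
      subst hkr
      refine ⟨Real.exp (-(w (k + 1) z) + w 1 z) * qnormSq g₀ q (k + 1) z,
        mul_nonneg (Real.exp_pos _).le hq0, ?_⟩
      have h := heqr z hz
      rw [div_eq_iff hGne] at h
      rw [show k + 1 - 1 = k from rfl] at h
      rw [h]
      push_cast
      ring
  rw [hAeq, hBeq, hlapg]
  exact final_ineq _ _ _ _ _ _ (Real.exp_pos _) hG hA0 hB0
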